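/- Let G be a finite multigraph on a vertically ordered vertex set partitioned into alternating cycles, with every vertex having at most two lower and at most two upper neighbors, and let G_1, G_2 be the up-edge and down-edge halves. Then the verbose persistence diagrams of G_1 and G_2 in the up direction are equal: for each vertex v_i of height i, both diagrams contain the point (i, ∞) if ldeg_G(v_i) = 0, and the point (i, i) if ldeg_G(v_i) > 0; and neither diagram has any points in homological dimension 1 off or on the diagonal other than none (both graphs are forests). -/

import Mathlib

/-! Common definitions: vertical (multi)graphs on `Fin n` (vertices ordered by height,
vertex `v` at height `(v : ℕ)`), edges stored as pairs `(lower, upper)`. -/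

/-- Number of edges of `E` from `v` to strictly lower vertices
(i.e. edges whose upper endpoint is `v`), with multiplicity. -/
def ldeg {n : ℕ} (E : Multiset (Fin n × Fin n)) (v : Fin n) : ℕ :=
  (E.filter (fun e => e.2 = v)).card

/-- Number of edges of `E` from `v` to strictly higher vertices
(i.e. edges whose lower endpoint is `v`), with multiplicity. -/
def hdeg {n : ℕ} (E : Multiset (Fin n × Fin n)) (v : Fin n) : ℕ :=
  (E.filter (fun e => e.1 = v)).card

/-- An alternating cycle: a closed walk `w 0, w 1, …, w (2m) = w 0` whose edges
alternately go up and down (odd-indexed vertices are above both cyclic neighbours). -/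
structure AltCycle (n : ℕ) where
  m : ℕ
  pos : 0 < m
  w : ℕ → Fin n
  closed : w (2 * m) = w 0
  up : ∀ j < m, w (2 * j) < w (2 * j + 1)
  down : ∀ j < m, w (2 * j + 2) < w (2 * j + 1)

/-- The up-edges of an alternating cycle (as `(lower, upper)` pairs). -/
def AltCycle.upEdges {n : ℕ} (C : AltCycle n) : Multiset (Fin n × Fin n) :=
  (Multiset.range C.m).map (fun j => (C.w (2 * j), C.w (2 * j + 1)))

/-- The down-edges of an alternating cycle (as `(lower, upper)` pairs). -/
def AltCycle.downEdges {n : ℕ} (C : AltCycle n) : Multiset (Fin n × Fin n) :=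
  (Multiset.range C.m).map (fun j => (C.w (2 * j + 2), C.w (2 * j + 1)))

/-- All edges of an alternating cycle. -/
def AltCycle.edges {n : ℕ} (C : AltCycle n) : Multiset (Fin n × Fin n) :=
  C.upEdges + C.downEdges

/-- The edge multiset `E` can be partitioned into alternating cycles. -/
def AltPartition {n : ℕ} (E : Multiset (Fin n × Fin n)) : Prop :=
  ∃ (k : ℕ) (Cs : Fin k → AltCycle n), E = ∑ i, (Cs i).edges

/-- The undirected edge between `a` and `b`, stored as a `(lower, upper)` pair. -/
def stepEdge {n : ℕ} (a b : Fin n) : Fin n × Fin n := if a < b then (a, b) else (b, a)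

/-- `E` contains a (vertex-simple) cycle: a closed walk with pairwise distinct vertices
whose (undirected) edge multiset is contained in `E`. -/
def HasCycle {n : ℕ} (E : Multiset (Fin n × Fin n)) : Prop :=
  ∃ (len : ℕ) (w : ℕ → Fin n), 0 < len ∧ w len = w 0 ∧
    (∀ i < len, ∀ j < len, w i = w j → i = j) ∧
    ((Multiset.range len).map (fun j => stepEdge (w j) (w (j + 1)))) ≤ E

/-- Reachability (connectivity) in the multigraph with edge multiset `E`. -/
def Reach {n : ℕ} (E : Multiset (Fin n × Fin n)) (a b : Fin n) : Prop :=
  Relation.ReflTransGen (fun x y => (x, y) ∈ E ∨ (y, x) ∈ E) a b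

/-- The connected component of `v` in `E` is a single vertex or a path along
vertices of strictly increasing height. -/
def IncPathComp {n : ℕ} (E : Multiset (Fin n × Fin n)) (v : Fin n) : Prop :=
  ∃ (m : ℕ) (p : Fin (m + 1) → Fin n), StrictMono p ∧
    (∀ u, Reach E v u ↔ ∃ i, p i = u) ∧
    (∀ i : Fin m, (p i.castSucc, p i.succ) ∈ E)

/-- The edges present at stage `j` of the upward lower-star filtration:
those whose upper endpoint has height at most `j`. -/
def levelEdges {n : ℕ} (E : Multiset (Fin n × Fin n)) (j : ℕ) : Multiset (Fin n × Fin n) :=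
  E.filter (fun e => (e.2 : ℕ) ≤ j)

/-- Death time (elder rule) of the 0-dimensional class created by vertex `v` in the
upward lower-star filtration: the first height at which `v` gets connected to a
strictly lower (older) vertex, or `∞` if this never happens. -/
noncomputable def death0 {n : ℕ} (E : Multiset (Fin n × Fin n)) (v : Fin n) : ℕ∞ :=
  sInf ((fun j : ℕ => (j : ℕ∞)) '' {j : ℕ | ∃ u, u < v ∧ Reach (levelEdges E j) u v})

/-- The 0-dimensional verbose persistence diagram in the up direction: one point
per vertex, born at the height of the vertex. -/
noncomputable def diag0 {n : ℕ} (E : Multiset (Fin n × Fin n)) : Multiset (ℕ × ℕ∞) :=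
  (Finset.univ.val : Multiset (Fin n)).map (fun v : Fin n => ((v : ℕ), death0 E v))

/-- Number of edges entering at height `j` (upper endpoint of height `j`). -/
def edgesAt {n : ℕ} (E : Multiset (Fin n × Fin n)) (j : ℕ) : ℕ :=
  (E.filter (fun e => (e.2 : ℕ) = j)).card

/-- Number of 0-dimensional points dying at height `j` in the verbose diagram. -/
noncomputable def deaths0At {n : ℕ} (E : Multiset (Fin n × Fin n)) (j : ℕ) : ℕ :=
  Nat.card {v : Fin n // death0 E v = (j : ℕ∞)}

/-- Number of 1-dimensional classes born at height `j`: edges entering at height `j`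
that are creators rather than destructors. -/
noncomputable def cyclesBornAt {n : ℕ} (E : Multiset (Fin n × Fin n)) (j : ℕ) : ℕ :=
  edgesAt E j - deaths0At E j

/-- The graph with the vertical order reversed (for the down direction). -/
def flipE {n : ℕ} (E : Multiset (Fin n × Fin n)) : Multiset (Fin n × Fin n) :=
  E.map (fun e => (e.2.rev, e.1.rev))

/-- Equality of the verbose persistence diagrams in the up direction. -/
def UpDiagEq {n : ℕ} (E1 E2 : Multiset (Fin n × Fin n)) : Prop :=
  diag0 E1 = diag0 E2 ∧ ∀ j, cyclesBornAt E1 j = cyclesBornAt E2 j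

/-- Equality of VPHTs for vertical graphs: the verbose diagrams agree in both the
up and the down direction. -/
def VPHTEq {n : ℕ} (E1 E2 : Multiset (Fin n × Fin n)) : Prop :=
  UpDiagEq E1 E2 ∧ UpDiagEq (flipE E1) (flipE E2)

/-- Number of connected components of the multigraph with edge multiset `E`. -/
noncomputable def numComponents {n : ℕ} (E : Multiset (Fin n × Fin n)) : ℕ :=
  Nat.card (Quot (Reach E))

/-- The edge multiset `E` can be partitioned into cycles (closed trails). -/
def CircuitPartition {n : ℕ} (E : Multiset (Fin n × Fin n)) : Prop :=
  ∃ (k : ℕ) (len : Fin k → ℕ) (w : Fin k → ℕ → Fin n),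
    (∀ i, 0 < len i) ∧ (∀ i, w i (len i) = w i 0) ∧
    (∀ i, ∀ j < len i, w i j ≠ w i (j + 1)) ∧
    (∑ i, (Multiset.range (len i)).map (fun j => stepEdge (w i j) (w i (j + 1)))) = E
section Aux
variable {n : ℕ}

private lemma two_le_card {α : Type*} [DecidableEq α] {s : Multiset α} {a b : α}
    (ha : a ∈ s) (hb : b ∈ s) (hne : a ≠ b) : 2 ≤ Multiset.card s := by
  have hb' : b ∈ s.erase a := (Multiset.mem_erase_of_ne (Ne.symm hne)).2 hb
  have h1 : 0 < Multiset.card (s.erase a) := Multiset.card_pos_iff_exists_mem.2 ⟨b, hb'⟩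
  have h2 := Multiset.card_erase_of_mem ha
  have h3 : 0 < Multiset.card s := Multiset.card_pos_iff_exists_mem.2 ⟨a, ha⟩
  rw [h2, Nat.pred_eq_sub_one] at h1
  omega

private lemma ldeg_add (A B : Multiset (Fin n × Fin n)) (v : Fin n) :
    ldeg (A + B) v = ldeg A v + ldeg B v := by
  simp [ldeg, Multiset.filter_add]

private lemma ldeg_sum {k : ℕ} (f : Fin k → Multiset (Fin n × Fin n)) (v : Fin n) :
    ldeg (∑ i, f i) v = ∑ i, ldeg (f i) v := by
  classical
  induction (Finset.univ : Finset (Fin k)) using Finset.cons_induction with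
  | empty => simp [ldeg]
  | cons a s ha ih => rw [Finset.sum_cons, Finset.sum_cons, ldeg_add, ih]

private lemma ldeg_up_eq_down (C : AltCycle n) (v : Fin n) :
    ldeg C.upEdges v = ldeg C.downEdges v := by
  simp [ldeg, AltCycle.upEdges, AltCycle.downEdges, Multiset.filter_map, Function.comp]

private lemma ldeg_level_le (G : Multiset (Fin n × Fin n)) (j : ℕ) (v : Fin n) :
    ldeg (levelEdges G j) v ≤ ldeg G v :=
  Multiset.card_le_card (Multiset.filter_le_filter _ (Multiset.filter_le _ G))

/-- In a graph whose edges go strictly up and each vertex has at most one lower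
neighbour, anything reachable from a vertex with no lower neighbour is above it. -/
private lemma reach_ge (L : Multiset (Fin n × Fin n))
    (hinc : ∀ e ∈ L, e.1 < e.2) (hld : ∀ u : Fin n, ldeg L u ≤ 1)
    (v : Fin n) (hv : ldeg L v = 0) :
    ∀ u, Relation.ReflTransGen (fun x y => (x, y) ∈ L ∨ (y, x) ∈ L) v u → v ≤ u := by
  have mono : ∀ (m : ℕ) (p : ℕ → Fin n), (∀ i < m, (p i, p (i + 1)) ∈ L) → p 0 ≤ p m := by
    intro m
    induction m with
    | zero => intro p _; exact le_refl _
    | succ m ih =>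
      intro p hp
      exact le_trans (ih p fun i hi => hp i (by omega))
        (le_of_lt (hinc _ (hp m (by omega))))
  have key : ∀ u, Relation.ReflTransGen (fun x y => (x, y) ∈ L ∨ (y, x) ∈ L) v u →
      ∃ (m : ℕ) (p : ℕ → Fin n), p 0 = v ∧ p m = u ∧ ∀ i < m, (p i, p (i + 1)) ∈ L := by
    intro u h
    induction h with
    | refl => exact ⟨0, fun _ => v, rfl, rfl, fun i hi => by omega⟩
    | @tail b c hb hstep ih =>
      obtain ⟨m, p, hp0, hpm, hpe⟩ := ih
      rcases hstep with hbc | hcb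
      · refine ⟨m + 1, fun i => if i = m + 1 then c else p i, ?_, ?_, ?_⟩
        · simp [hp0]
        · simp
        · intro i hi
          rcases Nat.lt_or_ge i m with h' | h'
          · have h1 : i ≠ m + 1 := by omega
            have h2 : i + 1 ≠ m + 1 := by omega
            simpa [h1, h2, show i ≠ m by omega] using hpe i h'
          · have h1 : m ≠ m + 1 := by omega
            have h0 : i = m := by omega
            simp only [h0]
            simpa [h1, hpm] using hbc
      · cases m with
        | zero =>
          exfalso
          have hbv : b = v := by rw [← hp0, hpm]
          have : (c, v) ∈ Multiset.filter (fun e => e.2 = v) L :=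
            Multiset.mem_filter.2 ⟨by rwa [hbv] at hcb, rfl⟩
          have : 0 < ldeg L v := Multiset.card_pos_iff_exists_mem.2 ⟨_, this⟩
          omega
        | succ m' =>
          have h1 : (p m', p (m' + 1)) ∈ L := hpe m' (by omega)
          have h1' : (p m', b) ∈ Multiset.filter (fun e => e.2 = b) L := by
            rw [← hpm]; exact Multiset.mem_filter.2 ⟨h1, rfl⟩
          have h2' : (c, b) ∈ Multiset.filter (fun e => e.2 = b) L :=
            Multiset.mem_filter.2 ⟨hcb, rfl⟩
          have hcp : c = p m' := by
            by_contra hne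
            have := two_le_card h2' h1' (by simp [Prod.ext_iff]; tauto)
            have := hld b
            simp only [ldeg] at this
            omega
          exact ⟨m', p, hp0, hcp.symm, fun i hi => hpe i (by omega)⟩
  intro u h
  obtain ⟨m, p, hp0, hpm, hpe⟩ := key u h
  rw [← hp0, ← hpm]
  exact mono m p hpe

/-- A vertex incident to no edge of `L` is reachable only from itself. -/
private lemma reach_isolated (L : Multiset (Fin n × Fin n)) (v : Fin n)
    (hiso : ∀ e ∈ L, e.1 ≠ v ∧ e.2 ≠ v) :
    ∀ u, Relation.ReflTransGen (fun x y => (x, y) ∈ L ∨ (y, x) ∈ L) u v → u = v := by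
  intro u h
  rcases Relation.ReflTransGen.cases_tail h with h' | ⟨c, _, hstep⟩
  · exact h'.symm
  · exfalso
    rcases hstep with h1 | h2
    · exact (hiso _ h1).2 rfl
    · exact (hiso _ h2).1 rfl

private lemma levelEdges_isolated {G : Multiset (Fin n × Fin n)}
    (hinc : ∀ e ∈ G, e.1 < e.2) {j : ℕ} {v : Fin n} (hj : j < (v : ℕ)) :
    ∀ e ∈ levelEdges G j, e.1 ≠ v ∧ e.2 ≠ v := by
  intro e he
  have he' := Multiset.mem_filter.1 he
  have h2 : ((e.2 : ℕ)) ≤ j := by simpa using he'.2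
  have h1 : (e.1 : ℕ) < (e.2 : ℕ) := hinc e he'.1
  constructor <;> intro h <;> subst h <;> omega

private lemma death0_eq_top (G : Multiset (Fin n × Fin n))
    (hinc : ∀ e ∈ G, e.1 < e.2) (hld : ∀ u : Fin n, ldeg G u ≤ 1)
    (v : Fin n) (hv : ldeg G v = 0) : death0 G v = ⊤ := by
  have hempty : {j : ℕ | ∃ u, u < v ∧ Reach (levelEdges G j) u v} = ∅ := by
    ext j
    simp only [Set.mem_setOf_eq, Set.mem_empty_iff_false, iff_false]
    rintro ⟨u, huv, hr⟩
    have hsym : Symmetric (fun x y : Fin n => (x, y) ∈ levelEdges G j ∨ (y, x) ∈ levelEdges G j) :=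
      fun x y h => Or.symm h
    have hr' := @Std.Symm.symm _ _ (@Relation.ReflTransGen.stdSymm _ _ ⟨hsym⟩) _ _ hr
    have hle : v ≤ u := by
      refine reach_ge _ ?_ ?_ v ?_ u hr'
      · intro e he; exact hinc e (Multiset.mem_of_mem_filter he)
      · intro u'; exact le_trans (ldeg_level_le G j u') (hld u')
      · have := ldeg_level_le G j v; omega
    exact absurd huv (not_lt.2 hle)
  rw [death0, hempty]
  simp

private lemma death0_eq_self (G : Multiset (Fin n × Fin n))
    (hinc : ∀ e ∈ G, e.1 < e.2) (v : Fin n) (hv : 0 < ldeg G v) :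
    death0 G v = ((v : ℕ) : ℕ∞) := by
  obtain ⟨e, he⟩ := Multiset.card_pos_iff_exists_mem.1 hv
  have he' := Multiset.mem_filter.1 he
  have hev : e.2 = v := he'.2
  have helt : e.1 < v := hev ▸ hinc e he'.1
  have hmem : (v : ℕ) ∈ {j : ℕ | ∃ u, u < v ∧ Reach (levelEdges G j) u v} := by
    refine ⟨e.1, helt, Relation.ReflTransGen.single (Or.inl ?_)⟩
    have : e ∈ levelEdges G (v : ℕ) := Multiset.mem_filter.2 ⟨he'.1, by simp [hev]⟩
    have hee : e = (e.1, v) := by rw [← hev]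
    rwa [← hee]
  refine le_antisymm (sInf_le (Set.mem_image_of_mem _ hmem)) (le_sInf ?_)
  rintro b ⟨j, hjS, rfl⟩
  simp only [Nat.cast_le]
  by_contra hlt
  push_neg at hlt
  obtain ⟨u, huv, hr⟩ := hjS
  have := reach_isolated _ v (levelEdges_isolated hinc hlt) u hr
  exact absurd huv (by simp [this])

end Aux

/-- For a vertical multigraph partitioned into alternating cycles in
which every vertex has at most two lower and at most two upper neighbours, the
up-direction verbose diagrams of the two halves `G₁`, `G₂` are equal; each vertex
`v` contributes the point `(v, ∞)` to both if `ldeg_G(v) = 0` and the point `(v, v)`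
if `ldeg_G(v) > 0`, and neither half has any 1-dimensional points (both are forests). -/
theorem halves_same_up_verbose_diagram {n : ℕ} (E : Multiset (Fin n × Fin n))
    (k : ℕ) (Cs : Fin k → AltCycle n) (hpart : E = ∑ i, (Cs i).edges)
    (hl : ∀ v : Fin n, ldeg E v ≤ 2) (hh : ∀ v : Fin n, hdeg E v ≤ 2)
    (G1 G2 : Multiset (Fin n × Fin n))
    (hG1 : G1 = ∑ i, (Cs i).upEdges) (hG2 : G2 = ∑ i, (Cs i).downEdges) :
    UpDiagEq G1 G2 ∧
    (∀ v : Fin n,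
      (ldeg E v = 0 → death0 G1 v = ⊤ ∧ death0 G2 v = ⊤) ∧
      (0 < ldeg E v → death0 G1 v = ((v : ℕ) : ℕ∞) ∧ death0 G2 v = ((v : ℕ) : ℕ∞))) ∧
    (∀ j : ℕ, cyclesBornAt G1 j = 0 ∧ cyclesBornAt G2 j = 0) := by
  classical
  subst hpart hG1 hG2
  set G1 : Multiset (Fin n × Fin n) := ∑ i, (Cs i).upEdges with hG1
  set G2 : Multiset (Fin n × Fin n) := ∑ i, (Cs i).downEdges with hG2
  have hinc1 : ∀ e ∈ G1, e.1 < e.2 := by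
    intro e he
    obtain ⟨i, -, hei⟩ := Multiset.mem_sum.1 he
    obtain ⟨j, hj, rfl⟩ := Multiset.mem_map.1 hei
    exact (Cs i).up j (Multiset.mem_range.1 hj)
  have hinc2 : ∀ e ∈ G2, e.1 < e.2 := by
    intro e he
    obtain ⟨i, -, hei⟩ := Multiset.mem_sum.1 he
    obtain ⟨j, hj, rfl⟩ := Multiset.mem_map.1 hei
    exact (Cs i).down j (Multiset.mem_range.1 hj)
  have hG12 : ∀ v, ldeg G1 v = ldeg G2 v := by
    intro v
    rw [hG1, hG2, ldeg_sum, ldeg_sum]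
    exact Finset.sum_congr rfl fun i _ => ldeg_up_eq_down (Cs i) v
  have hE : ∀ v, ldeg (∑ i, (Cs i).edges) v = ldeg G1 v + ldeg G2 v := by
    intro v
    simp only [AltCycle.edges]
    rw [Finset.sum_add_distrib, ldeg_add]
  have hld1 : ∀ v, ldeg G1 v ≤ 1 := by
    intro v; have := hl v; have := hE v; have := hG12 v; omega
  have hld2 : ∀ v, ldeg G2 v ≤ 1 := by
    intro v; have := hld1 v; have := hG12 v; omega
  have hdeq : ∀ v : Fin n,
      (ldeg (∑ i, (Cs i).edges) v = 0 → death0 G1 v = ⊤ ∧ death0 G2 v = ⊤) ∧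
      (0 < ldeg (∑ i, (Cs i).edges) v →
        death0 G1 v = ((v : ℕ) : ℕ∞) ∧ death0 G2 v = ((v : ℕ) : ℕ∞)) := by
    intro v
    have h12 := hG12 v
    have hEv := hE v
    constructor
    · intro h0
      exact ⟨death0_eq_top G1 hinc1 hld1 v (by omega),
             death0_eq_top G2 hinc2 hld2 v (by omega)⟩
    · intro hpos
      exact ⟨death0_eq_self G1 hinc1 v (by omega),
             death0_eq_self G2 hinc2 v (by omega)⟩
  have hdeath : ∀ v, death0 G1 v = death0 G2 v := by
    intro v
    rcases Nat.eq_zero_or_pos (ldeg (∑ i, (Cs i).edges) v) with h0 | hpos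
    · obtain ⟨a, b⟩ := (hdeq v).1 h0; rw [a, b]
    · obtain ⟨a, b⟩ := (hdeq v).2 hpos; rw [a, b]
  have hcycle : ∀ (G : Multiset (Fin n × Fin n)), (∀ e ∈ G, e.1 < e.2) →
      (∀ v, ldeg G v ≤ 1) → ∀ j, cyclesBornAt G j = 0 := by
    intro G hinc hld j
    rw [cyclesBornAt]
    rcases Nat.lt_or_ge j n with hj | hj
    · have hedg : edgesAt G j = ldeg G ⟨j, hj⟩ := by
        rw [edgesAt, ldeg]
        congr 1
        apply Multiset.filter_congr
        intro e _
        simp [Fin.ext_iff]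
      rcases Nat.eq_zero_or_pos (ldeg G ⟨j, hj⟩) with h0 | hpos
      · rw [hedg, h0]; simp
      · have hdj : death0 G ⟨j, hj⟩ = (j : ℕ∞) := by
          simpa using death0_eq_self G hinc ⟨j, hj⟩ hpos
        have h1 : 1 ≤ deaths0At G j := by
          rw [deaths0At]
          have hne : Nonempty {v : Fin n // death0 G v = (j : ℕ∞)} := ⟨⟨⟨j, hj⟩, hdj⟩⟩
          exact Nat.card_pos
        have h2 : edgesAt G j ≤ 1 := by rw [hedg]; exact hld _
        omega
    · have h0 : edgesAt G j = 0 := by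
        rw [edgesAt]
        have : Multiset.filter (fun e : Fin n × Fin n => ((e.2 : ℕ) = j)) G = 0 :=
          Multiset.filter_eq_nil.2 (fun e _ => by have := e.2.isLt; omega)
        rw [this]; rfl
      rw [h0, Nat.zero_sub]
  refine ⟨⟨?_, ?_⟩, hdeq, fun j => ⟨hcycle G1 hinc1 hld1 j, hcycle G2 hinc2 hld2 j⟩⟩
  · rw [diag0, diag0]
    exact Multiset.map_congr rfl fun v _ => by rw [hdeath v]
  · intro j
    rw [hcycle G1 hinc1 hld1 j, hcycle G2 hinc2 hld2 j]
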